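/- arXiv:1403.7823 — 4 statements merged into one kernel-verified Lean document; each statement's English description precedes it below -/
import Mathlib

section
/- Let a ≥ 1 and b ≥ 1 be real numbers satisfying 2a² + a²/(2a−1)² − 2a³/(2a−1) = 1/2 + b² − b/2 and ((8a² − 2a + 1)/(2a−1))² − 2 = 16(b² − b/2) − 1. Then 8a³ − 4a + 1 = 0, which is impossible for a ≥ 1. Hence no such pair (a, b) exists. -/
theorem multipliers_distinct (a b : ℝ) (ha : 1 ≤ a) (hb : 1 ≤ b)
    (h1 : 2 * a ^ 2 + a ^ 2 / (2 * a - 1) ^ 2 - 2 * a ^ 3 / (2 * a - 1)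
        = 1 / 2 + b ^ 2 - b / 2)
    (h2 : ((8 * a ^ 2 - 2 * a + 1) / (2 * a - 1)) ^ 2 - 2
        = 16 * (b ^ 2 - b / 2) - 1) :
    False := by
  have hne : (2 * a - 1) ≠ 0 := by nlinarith
  field_simp at h1 h2
  nlinarith [sq_nonneg a, sq_nonneg (a-1), sq_nonneg (a*a), sq_nonneg (a*(a-1)), mul_pos (by nlinarith : (0:ℝ) < 2*a-1) (by nlinarith : (0:ℝ) < a)]
end

section
/- Let F_k be the Fibonacci numbers with F_0 = F_1 = 1, and let C_k satisfy C_k = C_{k−1} + C_{k−2} + 2 F_{k−2} (with arbitrary fixed initial values C_1, C_2). Then lim_{k→∞} C_k/(k·F_k) = 4/(5+√5) = 2/(φ+2), where φ = (1+√5)/2. -/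
open Filter Real

theorem Ck_limit (F C : ℕ → ℝ)
    (hF0 : F 0 = 1) (hF1 : F 1 = 1) (hFrec : ∀ k, F (k + 2) = F (k + 1) + F k)
    (hCrec : ∀ k, C (k + 3) = C (k + 2) + C (k + 1) + 2 * F (k + 1)) :
    Tendsto (fun k : ℕ => C k / (k * F k)) atTop (nhds (4 / (5 + Real.sqrt 5))) := by
  obtain ⟨s, hsdef⟩ : ∃ s : ℝ, s = Real.sqrt 5 := ⟨_, rfl⟩
  rw [← hsdef]
  have hs2 : s ^ 2 = 5 := by rw [hsdef]; exact Real.sq_sqrt (by norm_num)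
  have hspos : 0 < s := by rw [hsdef]; exact Real.sqrt_pos.mpr (by norm_num)
  have hs3 : s < 3 := by nlinarith
  have hs1 : 1 < s := by nlinarith
  have hsne : s ≠ 0 := ne_of_gt hspos
  obtain ⟨a, ha⟩ : ∃ a : ℝ, a = (1 + s) / 2 := ⟨_, rfl⟩
  obtain ⟨b, hb⟩ : ∃ b : ℝ, b = (1 - s) / 2 := ⟨_, rfl⟩
  have hapos : 0 < a := by rw [ha]; linarith
  have hbneg : b < 0 := by rw [hb]; linarith
  have hane : a ≠ 0 := ne_of_gt hapos
  have ha2 : a ^ 2 = a + 1 := by rw [ha]; field_simp; nlinarith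
  have hb2 : b ^ 2 = b + 1 := by rw [hb]; field_simp; nlinarith
  have h1s : (1 : ℝ) + s ≠ 0 := by positivity
  -- positivity of F
  have Fpos : ∀ k, 0 < F k := by
    have H : ∀ k, 0 < F k ∧ 0 < F (k + 1) := by
      intro k
      induction k with
      | zero => constructor <;> norm_num [hF0, hF1]
      | succ n ih =>
        refine ⟨ih.2, ?_⟩
        have e : F (n + 2) = F (n + 1) + F n := hFrec n
        show 0 < F (n + 2)
        rw [e]; linarith [ih.1, ih.2]
    exact fun k => (H k).1
  -- Binet formula
  have binet : ∀ k, s * F k = a ^ (k + 1) - b ^ (k + 1) := by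
    have H : ∀ k, s * F k = a ^ (k + 1) - b ^ (k + 1) ∧
        s * F (k + 1) = a ^ (k + 2) - b ^ (k + 2) := by
      intro k
      induction k with
      | zero =>
        constructor
        · rw [hF0, ha, hb]; ring
        · rw [hF1, ha, hb]; ring
      | succ n ih =>
        refine ⟨ih.2, ?_⟩
        have e : F (n + 2) = F (n + 1) + F n := hFrec n
        show s * F (n + 2) = a ^ (n + 3) - b ^ (n + 3)
        rw [e]
        linear_combination ih.1 + ih.2 - a ^ (n + 1) * ha2 + b ^ (n + 1) * hb2
    exact fun k => (H k).1
  -- limit of ratio F j / F (j+1)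
  have habs : |b / a| < 1 := by
    rw [abs_div, abs_of_pos hapos, abs_of_neg hbneg, div_lt_one hapos, ha, hb]
    linarith
  have hpow : Tendsto (fun j : ℕ => (b / a) ^ (j + 1)) atTop (nhds 0) := by
    have := tendsto_pow_atTop_nhds_zero_of_abs_lt_one habs
    exact this.comp (tendsto_add_atTop_nat 1)
  have hu : Tendsto (fun j : ℕ => F j / a ^ (j + 1)) atTop (nhds (1 / s)) := by
    have hpt : ∀ j : ℕ, F j / a ^ (j + 1) = (1 - (b / a) ^ (j + 1)) / s := by
      intro j
      have hpne : a ^ (j + 1) ≠ 0 := pow_ne_zero _ hane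
      rw [div_pow]
      field_simp
      linear_combination binet j
    have T : Tendsto (fun j : ℕ => (1 - (b / a) ^ (j + 1)) / s) atTop (nhds ((1 - 0) / s)) :=
      (tendsto_const_nhds.sub hpow).div_const s
    rw [show (1 - 0 : ℝ) / s = 1 / s by norm_num] at T
    exact T.congr fun j => (hpt j).symm
  have hu1 : Tendsto (fun j : ℕ => F (j + 1) / a ^ (j + 2)) atTop (nhds (1 / s)) :=
    hu.comp (tendsto_add_atTop_nat 1)
  have hg : Tendsto (fun j : ℕ => F j / F (j + 1)) atTop (nhds (2 / (1 + s))) := by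
    have hne : (1 / s) * a ≠ 0 := by positivity
    have T := hu.div (hu1.mul (tendsto_const_nhds (x := a))) hne
    have hval : (1 / s) / ((1 / s) * a) = 2 / (1 + s) := by
      rw [ha]; field_simp
    rw [hval] at T
    refine T.congr fun j => ?_
    have hF1ne : F (j + 1) ≠ 0 := ne_of_gt (Fpos (j + 1))
    have hpne : a ^ (j + 1) ≠ 0 := pow_ne_zero _ hane
    rw [Pi.div_apply]
    field_simp
    ring
  -- closed form for C
  obtain ⟨x, y, hform⟩ : ∃ x y : ℝ, ∀ j : ℕ,
      C (j + 1) = 4 / 5 * (j + 1) * F (j + 1) - 2 / 5 * (j + 1) * F j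
        + x * F (j + 1) + y * F j := by
    refine ⟨C 2 - C 1 - 2, 2 * C 1 - C 2 + 8 / 5, ?_⟩
    have H : ∀ j : ℕ,
        (C (j + 1) = 4 / 5 * (j + 1) * F (j + 1) - 2 / 5 * (j + 1) * F j
          + (C 2 - C 1 - 2) * F (j + 1) + (2 * C 1 - C 2 + 8 / 5) * F j) ∧
        (C (j + 2) = 4 / 5 * (j + 2) * F (j + 2) - 2 / 5 * (j + 2) * F (j + 1)
          + (C 2 - C 1 - 2) * F (j + 2) + (2 * C 1 - C 2 + 8 / 5) * F (j + 1)) := by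
      intro j
      induction j with
      | zero =>
        have e2 : F 2 = F 1 + F 0 := hFrec 0
        constructor
        · rw [hF0, hF1]; push_cast; ring
        · rw [e2, hF0, hF1]; push_cast; ring
      | succ n ih =>
        have e3 : F (n + 3) = F (n + 2) + F (n + 1) := hFrec (n + 1)
        have e2 : F (n + 2) = F (n + 1) + F n := hFrec n
        have hc : C (n + 3) = C (n + 2) + C (n + 1) + 2 * F (n + 1) := hCrec n
        constructor
        · push_cast
          linear_combination ih.2
        · show C (n + 3) = 4 / 5 * (((n + 1 : ℕ) : ℝ) + 2) * F (n + 3)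
              - 2 / 5 * (((n + 1 : ℕ) : ℝ) + 2) * F (n + 2)
              + (C 2 - C 1 - 2) * F (n + 3) + (2 * C 1 - C 2 + 8 / 5) * F (n + 2)
          rw [hc, ih.1, ih.2, e3, e2]
          push_cast
          ring
    exact fun j => (H j).1
  -- assemble
  rw [show (4 : ℝ) / (5 + s) = 4 / 5 - 2 / 5 * (2 / (1 + s)) + x * 0
      + y * (0 * (2 / (1 + s))) by field_simp; linear_combination (-4 : ℝ) * hs2]
  rw [← tendsto_add_atTop_iff_nat 1]
  have h0 : Tendsto (fun j : ℕ => 1 / ((j : ℝ) + 1)) atTop (nhds 0) :=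
    tendsto_one_div_add_atTop_nhds_zero_nat
  have T : Tendsto (fun j : ℕ => 4 / 5 - 2 / 5 * (F j / F (j + 1))
      + x * (1 / ((j : ℝ) + 1)) + y * ((1 / ((j : ℝ) + 1)) * (F j / F (j + 1))))
      atTop (nhds (4 / 5 - 2 / 5 * (2 / (1 + s)) + x * 0 + y * (0 * (2 / (1 + s))))) :=
    ((tendsto_const_nhds.sub (hg.const_mul (2 / 5))).add (h0.const_mul x)).add
      ((h0.mul hg).const_mul y)
  refine T.congr fun j => ?_
  have hF1ne : F (j + 1) ≠ 0 := ne_of_gt (Fpos (j + 1))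
  have hjne : ((j : ℝ) + 1) ≠ 0 := by positivity
  show _ = C (j + 1) / ((((j : ℕ) + 1 : ℕ) : ℝ) * F (j + 1))
  rw [hform j]
  push_cast
  field_simp
end

section
/- Suppose R_k is a real sequence satisfying |R_k − R_{k−1} − R_{k−2}| ≤ β/F_{k−1} for all k ≥ 3 (with β > 0 a constant and F_k the Fibonacci numbers, F_0 = F_1 = 1). Then R_k = O(F_k); in particular lim_{k→∞} R_k/(k F_k) = 0. -/
open Filter

theorem Rk_bound (F R : ℕ → ℝ) (β : ℝ) (hβ : 0 < β)
    (hF0 : F 0 = 1) (hF1 : F 1 = 1) (hFrec : ∀ k, F (k + 2) = F (k + 1) + F k)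
    (hR : ∀ k, |R (k + 3) - R (k + 2) - R (k + 1)| ≤ β / F (k + 2)) :
    (∃ c : ℝ, ∀ k, |R k| ≤ c * F k) ∧
      Tendsto (fun k : ℕ => R k / (k * F k)) atTop (nhds 0) := by
  have hF1le : ∀ k, 1 ≤ F k := by
    intro k
    induction k using Nat.twoStepInduction with
    | zero => simp [hF0]
    | one => simp [hF1]
    | more n ih1 ih2 => rw [hFrec]; linarith
  have hFpos : ∀ k, (0:ℝ) < F k := fun k => lt_of_lt_of_le one_pos (hF1le k)
  have hFmono : ∀ k, F k ≤ F (k + 2) := by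
    intro k; rw [hFrec]; have := hF1le (k+1); linarith
  have ⟨A, hA0, hA1, hA2⟩ : ∃ A : ℝ, |R 0| + β ≤ A ∧ |R 1| + β ≤ A ∧ |R 2| + β ≤ A :=
    ⟨max (max |R 0| |R 1|) |R 2| + β,
      by have : |R 0| ≤ max (max |R 0| |R 1|) |R 2| := le_max_of_le_left (le_max_left _ _); linarith,
      by have : |R 1| ≤ max (max |R 0| |R 1|) |R 2| := le_max_of_le_left (le_max_right _ _); linarith,
      by have : |R 2| ≤ max (max |R 0| |R 1|) |R 2| := le_max_right _ _; linarith⟩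
  have key : ∀ k, |R k| ≤ A * F k - β / F k := by
    intro k
    induction k using Nat.strong_induction_on with
    | _ k ih =>
      match k with
      | 0 =>
        rw [hF0]
        have := abs_nonneg (R 0)
        simp only [mul_one, div_one]
        linarith
      | 1 =>
        rw [hF1]
        have := abs_nonneg (R 1)
        simp only [mul_one, div_one]
        linarith
      | 2 =>
        have hF2 : F 2 = 2 := by rw [hFrec 0, hF0, hF1]; norm_num
        rw [hF2]
        have := abs_nonneg (R 2)
        have hb2 : β / 2 ≤ β := by linarith
        linarith
      | (n + 3) =>
        have h1 := ih (n + 2) (by omega)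
        have h2 := ih (n + 1) (by omega)
        have htr : |R (n + 3)| ≤ |R (n + 3) - R (n + 2) - R (n + 1)| + |R (n + 2)| + |R (n + 1)| := by
          have := abs_add_le (R (n + 3) - R (n + 2) - R (n + 1) + R (n + 2)) (R (n + 1))
          have := abs_add_le (R (n + 3) - R (n + 2) - R (n + 1)) (R (n + 2))
          have h : R (n + 3) = (R (n + 3) - R (n + 2) - R (n + 1) + R (n + 2)) + R (n + 1) := by ring
          calc |R (n+3)| = |(R (n + 3) - R (n + 2) - R (n + 1) + R (n + 2)) + R (n + 1)| := by rw [← h]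
            _ ≤ _ := by
              refine le_trans (abs_add_le _ _) ?_
              have := abs_add_le (R (n + 3) - R (n + 2) - R (n + 1)) (R (n + 2))
              linarith
        have hβF : β / F (n + 3) ≤ β / F (n + 1) :=
          div_le_div_of_nonneg_left (le_of_lt hβ) (hFpos (n+1)) (hFmono (n+1))
        have hsum : F (n + 3) = F (n + 2) + F (n + 1) := hFrec (n + 1)
        have hRk := hR n
        calc |R (n + 3)| ≤ |R (n + 3) - R (n + 2) - R (n + 1)| + |R (n + 2)| + |R (n + 1)| := htr
          _ ≤ β / F (n + 2) + (A * F (n + 2) - β / F (n + 2)) + (A * F (n + 1) - β / F (n + 1)) := by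
              linarith
          _ = A * F (n + 3) - β / F (n + 1) := by rw [hsum]; ring
          _ ≤ A * F (n + 3) - β / F (n + 3) := by linarith
  have hbound : ∀ k, |R k| ≤ A * F k := by
    intro k
    have h1 := key k
    have h2 : 0 ≤ β / F k := div_nonneg (le_of_lt hβ) (le_of_lt (hFpos k))
    linarith
  refine ⟨⟨A, hbound⟩, ?_⟩
  apply squeeze_zero_norm' (a := fun k : ℕ => A / ↑k)
  · filter_upwards [eventually_ge_atTop 1] with k hk
    have hk0 : (0:ℝ) < (k:ℝ) := by exact_mod_cast Nat.lt_of_lt_of_le Nat.zero_lt_one hk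
    have hden : (0:ℝ) < (k:ℝ) * F k := mul_pos hk0 (hFpos k)
    rw [Real.norm_eq_abs, abs_div, abs_of_pos hden, div_le_div_iff₀ hden hk0]
    calc |R k| * ↑k ≤ A * F k * ↑k := mul_le_mul_of_nonneg_right (hbound k) hk0.le
      _ = A * (↑k * F k) := by ring
  · exact tendsto_const_div_atTop_nhds_zero_nat A
end

section
/- Let A be a transitive (primitive) nonnegative integer N×N matrix with Perron eigenvalue λ > 1 and right and left positive Perron eigenvectors v, u normalized so that Σᵢ uᵢvᵢ = 1. Then for each pair (i,j), (A^k)_{ij}·λ^{−k} → u_j·v_i as k → ∞ (equivalently, λ^{−k}A^k converges to the rank-one matrix v uᵀ). -/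
open Filter

theorem perron_frobenius_convergence (N : ℕ) (A : Matrix (Fin N) (Fin N) ℝ)
    (hint : ∀ i j, ∃ m : ℕ, A i j = (m : ℝ))
    (hprim : ∃ n : ℕ, ∀ i j, 0 < (A ^ n) i j)
    (lam : ℝ) (hlam : 1 < lam)
    (v u : Fin N → ℝ) (hv : ∀ i, 0 < v i) (hu : ∀ i, 0 < u i)
    (hAv : A.mulVec v = lam • v) (huA : A.vecMul u = lam • u)
    (hnorm : ∑ i, u i * v i = 1) :
    ∀ i j, Tendsto (fun k : ℕ => (A ^ k) i j / lam ^ k) atTop (nhds (u j * v i)) := by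
  intro i j
  have hlam0 : (0:ℝ) < lam := lt_trans one_pos hlam
  have hA0 : ∀ a b, 0 ≤ A a b := by
    intro a b; obtain ⟨m, hm⟩ := hint a b; rw [hm]; exact Nat.cast_nonneg m
  have hAp0 : ∀ (k : ℕ) a b, 0 ≤ (A ^ k) a b := by
    intro k
    induction k with
    | zero => intro a b; simp [Matrix.one_apply]; split <;> norm_num
    | succ k ih =>
      intro a b
      rw [pow_succ, Matrix.mul_apply]
      exact Finset.sum_nonneg fun l _ => mul_nonneg (ih a l) (hA0 l b)
  -- entrywise eigenvector equations
  have hAv' : ∀ a, ∑ l, A a l * v l = lam * v a := by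
    intro a
    have := congrFun hAv a
    simpa [Matrix.mulVec, dotProduct] using this
  have huA' : ∀ b, ∑ l, u l * A l b = lam * u b := by
    intro b
    have := congrFun huA b
    simpa [Matrix.vecMul, dotProduct] using this
  -- a positive power with positive exponent
  obtain ⟨n, hn⟩ := hprim
  have hcolA : ∀ b, ∃ l, 0 < A l b := by
    intro b
    by_contra h
    push_neg at h
    have h2 : ∑ l, u l * A l b = 0 := Finset.sum_eq_zero fun l _ => by
      have h3 : A l b = 0 := le_antisymm (h l) (hA0 l b)
      rw [h3, mul_zero]
    rw [huA' b] at h2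
    exact absurd h2 (ne_of_gt (mul_pos hlam0 (hu b)))
  have hpos : ∀ a b, 0 < (A ^ (n + 1)) a b := by
    intro a b
    obtain ⟨l, hl⟩ := hcolA b
    rw [pow_succ, Matrix.mul_apply]
    exact Finset.sum_pos' (fun l' _ => mul_nonneg (hAp0 n a l') (hA0 l' b))
      ⟨l, Finset.mem_univ l, mul_pos (hn a l) hl⟩
  set n' : ℕ := n + 1 with hn'
  -- the normalized matrix B
  set B : Matrix (Fin N) (Fin N) ℝ := lam⁻¹ • A with hBdef
  have hBpow : ∀ k : ℕ, B ^ k = (lam⁻¹ ^ k) • A ^ k := fun k => smul_pow _ _ _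
  have hBk0 : ∀ (k : ℕ) a b, 0 ≤ (B ^ k) a b := by
    intro k a b
    rw [hBpow]
    simp only [Matrix.smul_apply, smul_eq_mul]
    exact mul_nonneg (by positivity) (hAp0 k a b)
  have hBkpos : ∀ a b, 0 < (B ^ n') a b := by
    intro a b
    rw [hBpow]
    simp only [Matrix.smul_apply, smul_eq_mul]
    exact mul_pos (by positivity) (hpos a b)
  -- B^k fixes v and u
  have hBv1 : ∀ a, ∑ l, B a l * v l = v a := by
    intro a
    have : ∑ l, B a l * v l = lam⁻¹ * ∑ l, A a l * v l := by
      rw [Finset.mul_sum]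
      refine Finset.sum_congr rfl fun l _ => ?_
      simp [hBdef, Matrix.smul_apply, smul_eq_mul, mul_assoc]
    rw [this, hAv' a, ← mul_assoc, inv_mul_cancel₀ hlam0.ne', one_mul]
  have huB1 : ∀ b, ∑ l, u l * B l b = u b := by
    intro b
    have : ∑ l, u l * B l b = lam⁻¹ * ∑ l, u l * A l b := by
      rw [Finset.mul_sum]
      refine Finset.sum_congr rfl fun l _ => ?_
      simp [hBdef, Matrix.smul_apply, smul_eq_mul]; ring
    rw [this, huA' b, ← mul_assoc, inv_mul_cancel₀ hlam0.ne', one_mul]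
  have hBvk : ∀ (k : ℕ) a, ∑ l, (B ^ k) a l * v l = v a := by
    intro k
    induction k with
    | zero => intro a; simp [Matrix.one_apply]
    | succ k ih =>
      intro a
      have : ∀ l, (B ^ (k+1)) a l = ∑ m, (B ^ k) a m * B m l := by
        intro l; rw [pow_succ, Matrix.mul_apply]
      calc ∑ l, (B ^ (k+1)) a l * v l
          = ∑ l, ∑ m, (B ^ k) a m * B m l * v l := by
            refine Finset.sum_congr rfl fun l _ => ?_
            rw [this l, Finset.sum_mul]
        _ = ∑ m, (B ^ k) a m * ∑ l, B m l * v l := by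
            rw [Finset.sum_comm]
            refine Finset.sum_congr rfl fun m _ => ?_
            rw [Finset.mul_sum]
            refine Finset.sum_congr rfl fun l _ => by ring
        _ = ∑ m, (B ^ k) a m * v m := by
            refine Finset.sum_congr rfl fun m _ => by rw [hBv1 m]
        _ = v a := ih a
  have huBk : ∀ (k : ℕ) b, ∑ l, u l * (B ^ k) l b = u b := by
    intro k
    induction k with
    | zero => intro b; simp [Matrix.one_apply]
    | succ k ih =>
      intro b
      have hstep : ∀ l, (B ^ (k+1)) l b = ∑ m, B l m * (B ^ k) m b := by
        intro l; rw [pow_succ', Matrix.mul_apply]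
      calc ∑ l, u l * (B ^ (k+1)) l b
          = ∑ l, ∑ m, u l * B l m * (B ^ k) m b := by
            refine Finset.sum_congr rfl fun l _ => ?_
            rw [hstep l, Finset.mul_sum]
            refine Finset.sum_congr rfl fun m _ => by ring
        _ = ∑ m, (∑ l, u l * B l m) * (B ^ k) m b := by
            rw [Finset.sum_comm]
            refine Finset.sum_congr rfl fun m _ => by rw [Finset.sum_mul]
        _ = ∑ m, u m * (B ^ k) m b := by
            refine Finset.sum_congr rfl fun m _ => by rw [huB1 m]
        _ = u b := ih b
  -- ratios, max and min
  have ne : (Finset.univ : Finset (Fin N)).Nonempty := ⟨i, Finset.mem_univ i⟩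
  set f : ℕ → Fin N → ℝ := fun k l => (B ^ k) l j / v l with hf
  set Mx : ℕ → ℝ := fun k => Finset.univ.sup' ne (f k) with hMx
  set mn : ℕ → ℝ := fun k => Finset.univ.inf' ne (f k) with hmn
  have hfM : ∀ k l, f k l ≤ Mx k := fun k l => Finset.le_sup' (f k) (Finset.mem_univ l)
  have hmf : ∀ k l, mn k ≤ f k l := fun k l => Finset.inf'_le (f k) (Finset.mem_univ l)
  have hBub : ∀ k l, (B ^ k) l j ≤ Mx k * v l := fun k l => (div_le_iff₀ (hv l)).1 (hfM k l)
  have hBlb : ∀ k l, mn k * v l ≤ (B ^ k) l j := fun k l => (le_div_iff₀ (hv l)).1 (hmf k l)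
  -- one-step bounds
  have keyub : ∀ k a, (B ^ (1 + k)) a j ≤ Mx k * v a := by
    intro k a
    rw [pow_add, pow_one, Matrix.mul_apply]
    calc ∑ l, B a l * (B ^ k) l j
        ≤ ∑ l, B a l * (Mx k * v l) := by
          refine Finset.sum_le_sum fun l _ => ?_
          exact mul_le_mul_of_nonneg_left (hBub k l) (by have h := hBk0 1 a l; rwa [pow_one] at h)
      _ = Mx k * ∑ l, B a l * v l := by
          rw [Finset.mul_sum]; exact Finset.sum_congr rfl fun l _ => by ring
      _ = Mx k * v a := by rw [hBv1 a]
  have keylb : ∀ k a, mn k * v a ≤ (B ^ (1 + k)) a j := by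
    intro k a
    rw [pow_add, pow_one, Matrix.mul_apply]
    calc mn k * v a
        = mn k * ∑ l, B a l * v l := by rw [hBv1 a]
      _ = ∑ l, B a l * (mn k * v l) := by
          rw [Finset.mul_sum]; exact Finset.sum_congr rfl fun l _ => by ring
      _ ≤ ∑ l, B a l * (B ^ k) l j := by
          refine Finset.sum_le_sum fun l _ => ?_
          exact mul_le_mul_of_nonneg_left (hBlb k l) (by have h := hBk0 1 a l; rwa [pow_one] at h)
  have hManti : Antitone Mx := by
    apply antitone_nat_of_succ_le
    intro k
    apply Finset.sup'_le
    intro a _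
    show (B ^ (k+1)) a j / v a ≤ Mx k
    rw [div_le_iff₀ (hv a), add_comm k 1]
    exact keyub k a
  have hmmono : Monotone mn := by
    apply monotone_nat_of_le_succ
    intro k
    apply Finset.le_inf'
    intro a _
    show mn k ≤ (B ^ (k+1)) a j / v a
    rw [le_div_iff₀ (hv a), add_comm k 1]
    exact keylb k a
  -- the contraction coefficient
  set P : Matrix (Fin N) (Fin N) ℝ := B ^ n' with hP
  set θ : ℝ := Finset.univ.inf' ne (fun a => Finset.univ.inf' ne (fun b => P a b * v b / v a)) with hθ
  have hθle : ∀ a b, θ ≤ P a b * v b / v a := fun a b =>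
    le_trans (Finset.inf'_le _ (Finset.mem_univ a)) (Finset.inf'_le _ (Finset.mem_univ b))
  have hθpos : 0 < θ := by
    rw [hθ, Finset.lt_inf'_iff]
    intro a _
    rw [Finset.lt_inf'_iff]
    intro b _
    exact div_pos (mul_pos (hBkpos a b) (hv b)) (hv a)
  have hθ1 : θ ≤ 1 := by
    have h1 : P i i * v i ≤ v i := by
      calc P i i * v i ≤ ∑ l, P i l * v l :=
            Finset.single_le_sum (fun l _ => mul_nonneg (hBkpos i l).le (hv l).le) (Finset.mem_univ i)
        _ = v i := hBvk n' i
    exact (hθle i i).trans ((div_le_one (hv i)).2 h1)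
  have hDnonneg : ∀ k, 0 ≤ Mx k - mn k := fun k => sub_nonneg.2 ((hmf k i).trans (hfM k i))
  -- contraction estimate
  have hcontr : ∀ k, Mx (n' + k) ≤ Mx k - θ * (Mx k - mn k) := by
    intro k
    obtain ⟨l₀, -, hl₀⟩ := Finset.exists_mem_eq_inf' ne (f k)
    have hx0 : (B ^ k) l₀ j = mn k * v l₀ := by
      have h0 : mn k = (B ^ k) l₀ j / v l₀ := hl₀
      rw [h0, div_mul_cancel₀ _ (hv l₀).ne']
    apply Finset.sup'_le
    intro a _
    show (B ^ (n' + k)) a j / v a ≤ Mx k - θ * (Mx k - mn k)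
    rw [div_le_iff₀ (hv a)]
    have hexp : (B ^ (n' + k)) a j = ∑ l, P a l * (B ^ k) l j := by
      rw [pow_add, Matrix.mul_apply]
    have hsum1 : ∑ l, P a l * (Mx k * v l) = Mx k * v a := by
      rw [← hBvk n' a, Finset.mul_sum]
      exact Finset.sum_congr rfl fun l _ => by ring
    have hsum2 : P a l₀ * (Mx k * v l₀ - (B ^ k) l₀ j)
        ≤ ∑ l, P a l * (Mx k * v l - (B ^ k) l j) := by
      refine Finset.single_le_sum (f := fun l => P a l * (Mx k * v l - (B ^ k) l j)) (fun l _ => ?_) (Finset.mem_univ l₀)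
      exact mul_nonneg (hBkpos a l).le (sub_nonneg.2 (hBub k l))
    have hmain : (B ^ (n' + k)) a j ≤ Mx k * v a - P a l₀ * ((Mx k - mn k) * v l₀) := by
      rw [hexp]
      have : ∑ l, P a l * (B ^ k) l j
          = ∑ l, P a l * (Mx k * v l) - ∑ l, P a l * (Mx k * v l - (B ^ k) l j) := by
        rw [← Finset.sum_sub_distrib]
        exact Finset.sum_congr rfl fun l _ => by ring
      rw [this, hsum1]
      have h2 : P a l₀ * ((Mx k - mn k) * v l₀)
          = P a l₀ * (Mx k * v l₀ - (B ^ k) l₀ j) := by rw [hx0]; ring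
      rw [h2]
      linarith [hsum2]
    have hcoef : θ * v a ≤ P a l₀ * v l₀ := (le_div_iff₀ (hv a)).1 (hθle a l₀)
    have hD := hDnonneg k
    nlinarith [hmain, mul_le_mul_of_nonneg_left hcoef hD]
  -- the gap D k tends to 0
  set D : ℕ → ℝ := fun k => Mx k - mn k with hD
  set c : ℝ := 1 - θ with hc
  have hc0 : 0 ≤ c := by rw [hc]; linarith
  have hc1 : c < 1 := by rw [hc]; linarith
  have hDanti : Antitone D := fun a b hab => sub_le_sub (hManti hab) (hmmono hab)
  have hDc : ∀ k, D (n' + k) ≤ c * D k := by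
    intro k
    have h1 := hcontr k
    have h2 : mn k ≤ mn (n' + k) := hmmono (Nat.le_add_left k n')
    show Mx (n' + k) - mn (n' + k) ≤ (1 - θ) * (Mx k - mn k)
    nlinarith
  have hDpow : ∀ t : ℕ, D (n' * t) ≤ c ^ t * D 0 := by
    intro t
    induction t with
    | zero => simp
    | succ t ih =>
      have h1 : n' * (t + 1) = n' + n' * t := by ring
      rw [h1]
      calc D (n' + n' * t) ≤ c * D (n' * t) := hDc _
        _ ≤ c * (c ^ t * D 0) := mul_le_mul_of_nonneg_left ih hc0
        _ = c ^ (t+1) * D 0 := by ring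
  have hDk : ∀ k, D k ≤ c ^ (k / n') * D 0 := by
    intro k
    have h1 : n' * (k / n') ≤ k := Nat.mul_div_le k n'
    exact (hDanti h1).trans (hDpow (k / n'))
  have hn'pos : 0 < n' := Nat.succ_pos n
  have hdiv : Tendsto (fun k : ℕ => k / n') atTop atTop := by
    apply tendsto_atTop_atTop.2
    intro b
    exact ⟨b * n', fun k hk => (Nat.le_div_iff_mul_le hn'pos).2 hk⟩
  have hpowlim : Tendsto (fun t : ℕ => c ^ t) atTop (nhds 0) :=
    tendsto_pow_atTop_nhds_zero_of_lt_one hc0 hc1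
  have hglim : Tendsto (fun k : ℕ => c ^ (k / n') * D 0) atTop (nhds 0) := by
    have := (hpowlim.comp hdiv).mul_const (D 0)
    rw [zero_mul] at this
    exact this
  have hDlim : Tendsto D atTop (nhds 0) :=
    squeeze_zero (fun k => hDnonneg k) hDk hglim
  -- convergence of Mx, mn and the ratios
  have hMbdd : BddBelow (Set.range Mx) := by
    refine ⟨mn 0, ?_⟩
    rintro x ⟨k, rfl⟩
    exact (hmmono (Nat.zero_le k)).trans ((hmf k i).trans (hfM k i))
  have hMlim : Tendsto Mx atTop (nhds (⨅ k, Mx k)) := tendsto_atTop_ciInf hManti hMbdd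
  set L : ℝ := ⨅ k, Mx k with hL
  have hmlim : Tendsto mn atTop (nhds L) := by
    have h1 : Tendsto (fun k => Mx k - D k) atTop (nhds (L - 0)) := hMlim.sub hDlim
    rw [sub_zero] at h1
    refine h1.congr fun k => ?_
    show Mx k - D k = mn k
    rw [hD]; ring
  have hflim : ∀ l, Tendsto (fun k => f k l) atTop (nhds L) := fun l =>
    tendsto_of_tendsto_of_tendsto_of_le_of_le hmlim hMlim (fun k => hmf k l) (fun k => hfM k l)
  have hBlim : ∀ l, Tendsto (fun k => (B ^ k) l j) atTop (nhds (L * v l)) := by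
    intro l
    have h1 := (hflim l).mul_const (v l)
    refine h1.congr fun k => ?_
    show f k l * v l = (B ^ k) l j
    rw [hf]
    exact div_mul_cancel₀ _ (hv l).ne'
  -- identify L
  have hsumlim : Tendsto (fun k => ∑ l, u l * (B ^ k) l j) atTop
      (nhds (∑ l, u l * (L * v l))) :=
    tendsto_finset_sum _ (fun l _ => (hBlim l).const_mul (u l))
  have hconst : (fun k => ∑ l, u l * (B ^ k) l j) = fun _ => u j :=
    funext fun k => huBk k j
  rw [hconst] at hsumlim
  have hLu : u j = ∑ l, u l * (L * v l) := tendsto_nhds_unique tendsto_const_nhds hsumlim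
  have hLval : ∑ l, u l * (L * v l) = L := by
    calc ∑ l, u l * (L * v l) = L * ∑ l, u l * v l := by
          rw [Finset.mul_sum]; exact Finset.sum_congr rfl fun l _ => by ring
      _ = L := by rw [hnorm, mul_one]
  have hLeq : L = u j := by rw [hLu, hLval]
  -- conclude
  have hfinal := hBlim i
  rw [hLeq] at hfinal
  refine hfinal.congr fun k => ?_
  show (B ^ k) i j = (A ^ k) i j / lam ^ k
  rw [hBpow]
  simp only [Matrix.smul_apply, smul_eq_mul]
  rw [div_eq_mul_inv, ← inv_pow, mul_comm]
end
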